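/- For every admissible distance sequence (m_1, …, m_k) with k ≥ 3, the entries are coprime: gcd(m_1, …, m_k) = 1. -/

import Mathlib

/-- Transition table of a DFA over `ZMod 3` certifying that admissible sequences
are never all divisible by 3 (once length ≥ 3). -/
def admD (q : Fin 8) (a : ZMod 3) : Fin 8 :=
  if q = 0 then 0
  else if q = 1 then (if a = 0 then 1 else if a = 1 then 0 else 2)
  else if q = 2 then (if a = 0 then 0 else if a = 1 then 2 else 1)
  else if q = 3 then (if a = 0 then 1 else if a = 1 then 2 else 3)
  else if q = 4 then (if a = 0 then 6 else if a = 1 then 0 else 2)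
  else if q = 5 then (if a = 0 then 1 else if a = 1 then 2 else 3)
  else if q = 6 then (if a = 0 then 1 else if a = 1 then 0 else 2)
  else (if a = 0 then 4 else if a = 1 then 2 else 5)

/-- Admissible distance sequences: the sequences of vertex distances between
consecutive leaves of marked admissible trees with `2 k` vertices. -/
inductive AdmSeq : List ℤ → Prop
  | base : AdmSeq [2]
  | left (a : ℤ) (l : List ℤ) : AdmSeq (a :: l) → AdmSeq (3 :: (a + 1) :: l)
  | right (l : List ℤ) (a : ℤ) : AdmSeq (l ++ [a]) → AdmSeq (l ++ [a + 1, 3])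
  | mid (l₁ : List ℤ) (a b : ℤ) (l₂ : List ℤ) :
      AdmSeq (l₁ ++ a :: b :: l₂) → AdmSeq (l₁ ++ (a + 1) :: 3 :: (b + 1) :: l₂)

def admRun (q : Fin 8) (l : List ℤ) : Fin 8 :=
  List.foldl (fun p (x : ℤ) => admD p ((Int.cast x : ZMod 3))) q l

def admBad (q : Fin 8) : Prop := q = 1 ∨ q = 2 ∨ q = 3

instance (q : Fin 8) : Decidable (admBad q) := by unfold admBad; infer_instance

/-- Simulation relation: `admRel p q` means every word bad from `p` is bad from `q`. -/
def admRel (p q : Fin 8) : Prop :=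
  (p, q) ∈ [((0:Fin 8),(0:Fin 8)), (0,1), (0,2), (0,3), (0,4), (0,5), (0,6), (0,7),
    (1,1), (1,3), (2,2), (2,3), (3,3), (4,1), (4,3), (4,4), (4,5), (4,6),
    (5,3), (5,5), (6,1), (6,3), (6,5), (6,6), (7,3), (7,5), (7,7)]

instance (p q : Fin 8) : Decidable (admRel p q) := by unfold admRel; infer_instance

lemma admRel_bad : ∀ p q : Fin 8, admRel p q → admBad p → admBad q := by decide

lemma admRel_step : ∀ p q : Fin 8, admRel p q → ∀ a : ZMod 3,
    admRel (admD p a) (admD q a) := by decide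

lemma admRel_sim : ∀ (l : List ℤ) (p q : Fin 8), admRel p q →
    admBad (admRun p l) → admBad (admRun q l) := by
  intro l
  induction l with
  | nil => intro p q h hb; exact admRel_bad _ _ h hb
  | cons x t ih =>
      intro p q h hb
      exact ih _ _ (admRel_step _ _ h _) hb

lemma admRun_cons (q : Fin 8) (x : ℤ) (l : List ℤ) :
    admRun q (x :: l) = admRun (admD q (x : ZMod 3)) l := rfl

lemma admRun_append (q : Fin 8) (l₁ l₂ : List ℤ) :
    admRun q (l₁ ++ l₂) = admRun (admRun q l₁) l₂ := by
  unfold admRun; exact List.foldl_append ..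

lemma adm_good (m : List ℤ) (hm : AdmSeq m) : ¬ admBad (admRun 7 m) := by
  induction hm with
  | base =>
      show ¬ admBad (admRun 7 [2]); decide
  | left a l h ih =>
      rw [admRun_cons, admRun_cons]
      rw [admRun_cons] at ih
      intro hb
      apply ih
      have hrel : ∀ r : ZMod 3,
          admRel (admD (admD 7 ((3:ℤ) : ZMod 3)) (r + 1)) (admD 7 r) := by decide
      have : ((a + 1 : ℤ) : ZMod 3) = ((a : ZMod 3) + 1) := by push_cast; ring
      rw [this] at hb
      exact admRel_sim _ _ _ (hrel ((a : ZMod 3))) hb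
  | right l a h ih =>
      rw [admRun_append] at ih ⊢
      rw [admRun_cons] at ih ⊢
      rw [admRun_cons]
      intro hb
      apply ih
      have hq : ∀ (q : Fin 8) (r : ZMod 3),
          admBad (admRun (admD (admD q (r+1)) ((3:ℤ) : ZMod 3)) []) →
          admBad (admRun (admD q r) []) := by decide
      have hc : ((a + 1 : ℤ) : ZMod 3) = ((a : ZMod 3) + 1) := by push_cast; ring
      rw [hc] at hb
      exact hq _ _ hb
  | mid l₁ a b l₂ h ih =>
      rw [admRun_append] at ih ⊢
      rw [admRun_cons, admRun_cons] at ih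
      rw [admRun_cons, admRun_cons, admRun_cons]
      intro hb
      apply ih
      have hrel : ∀ (q : Fin 8) (r s : ZMod 3),
          admRel (admD (admD (admD q (r+1)) ((3:ℤ) : ZMod 3)) (s+1))
            (admD (admD q r) s) := by decide
      have hc : ((a + 1 : ℤ) : ZMod 3) = ((a : ZMod 3) + 1) := by push_cast; ring
      have hc' : ((b + 1 : ℤ) : ZMod 3) = ((b : ZMod 3) + 1) := by push_cast; ring
      rw [hc, hc'] at hb
      exact admRel_sim _ _ _ (hrel _ _ _) hb

lemma adm_three_mem (m : List ℤ) (hm : AdmSeq m) : m = [2] ∨ (3 : ℤ) ∈ m := by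
  induction hm with
  | base => exact Or.inl rfl
  | left a l h ih => exact Or.inr List.mem_cons_self
  | right l a h ih => right; simp
  | mid l₁ a b l₂ h ih => right; simp

lemma adm_dvd_foldr_gcd : ∀ (L : List ℕ) (x : ℕ), x ∈ L → L.foldr Nat.gcd 0 ∣ x := by
  intro L
  induction L with
  | nil => intro x hx; cases hx
  | cons y t ih =>
      intro x hx
      rcases List.mem_cons.mp hx with rfl | hx
      · exact Nat.gcd_dvd_left _ _
      · exact dvd_trans (Nat.gcd_dvd_right _ _) (ih x hx)

lemma adm_run_zero : ∀ (l : List ℤ), (∀ x ∈ l, ((x : ZMod 3) = 0)) →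
    admRun 1 l = 1 := by
  intro l
  induction l with
  | nil => intro _; rfl
  | cons x t ih =>
      intro h
      rw [admRun_cons, h x List.mem_cons_self]
      exact ih fun y hy => h y (List.mem_cons_of_mem _ hy)

/-- the entries of an admissible distance sequence of length at least 3
are coprime. -/
theorem admSeq_gcd_eq_one (m : List ℤ) (hm : AdmSeq m) (h3 : 3 ≤ m.length) :
    (m.map Int.natAbs).foldr Nat.gcd 0 = 1 := by
  set g := (m.map Int.natAbs).foldr Nat.gcd 0 with hg
  have hmem3 : (3 : ℤ) ∈ m := by
    rcases adm_three_mem m hm with rfl | h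
    · simp at h3
    · exact h
  have hdvd : g ∣ 3 := by
    have : (3 : ℕ) ∈ m.map Int.natAbs := by
      exact List.mem_map.mpr ⟨3, hmem3, rfl⟩
    exact adm_dvd_foldr_gcd _ _ this
  have hall : ∀ x ∈ m, g ∣ x.natAbs := fun x hx =>
    adm_dvd_foldr_gcd _ _ (List.mem_map.mpr ⟨x, hx, rfl⟩)
  rcases (Nat.dvd_prime Nat.prime_three).mp hdvd with h1 | h33
  · exact h1
  · exfalso
    apply adm_good m hm
    have hz : ∀ x ∈ m, ((x : ZMod 3) = 0) := by
      intro x hx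
      have : (3 : ℤ) ∣ x := by
        have h := hall x hx
        rw [h33] at h
        exact Int.natAbs_dvd_natAbs.mp (by simpa using h)
      exact (ZMod.intCast_zmod_eq_zero_iff_dvd x 3).mpr this
    -- m has length ≥ 3, all entries ≡ 0 mod 3, so run ends in a bad state
    match m, h3 with
    | x :: y :: z :: t, _ =>
      rw [admRun_cons, admRun_cons, admRun_cons,
        hz x (by simp), hz y (by simp), hz z (by simp)]
      have ht : admRun (admD (admD (admD 7 0) 0) 0) t = admRun 1 t := rfl
      rw [ht, adm_run_zero t (fun w hw => hz w (by simp [hw]))]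
      decide
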